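/- All four input-weight gradients of one LSTM step are outer products with the input: for one LSTM step followed by a dense output layer and a differentiable loss E, ∂E/∂W_o = Δ^o · xᵀ, ∂E/∂W_i = Δ^i · xᵀ, ∂E/∂W_g = Δ^g · xᵀ, and ∂E/∂W_f = Δ^f · xᵀ, where Δ^o = ∂E/∂h_t ⊙ tanh(c_t) ⊙ o_t ⊙ (1 − o_t), Δ^i = ∂E/∂h_t ⊙ o_t ⊙ (1 − tanh²(c_t)) ⊙ g_t ⊙ i_t ⊙ (1 − i_t), Δ^g = ∂E/∂h_t ⊙ o_t ⊙ (1 − tanh²(c_t)) ⊙ i_t ⊙ (1 − g_t²), and Δ^f = ∂E/∂h_t ⊙ o_t ⊙ (1 − tanh²(c_t)) ⊙ c_{t-1} ⊙ f_t ⊙ (1 − f_t), with ∂E/∂h_t = W_outᵀ [∇E(ŷ) ⊙ φ_out'(W_out h_t)]. -/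

import Mathlib

noncomputable section

/-- Matrix-vector product: `(W v)_i = ∑ j, W i j * v j`. -/
def matVec {e d : ℕ} (W : Fin e → Fin d → ℝ) (v : Fin d → ℝ) : Fin e → ℝ :=
  fun i => ∑ j, W i j * v j

/-- Transposed matrix-vector product: `(Wᵀ v)_j = ∑ i, W i j * v i`. -/
def matVecT {e d : ℕ} (W : Fin e → Fin d → ℝ) (v : Fin e → ℝ) : Fin d → ℝ :=
  fun j => ∑ i, W i j * v i

/-- Componentwise application of a scalar function. -/
def cw {n : ℕ} (φ : ℝ → ℝ) (v : Fin n → ℝ) : Fin n → ℝ := fun i => φ (v i)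

/-- Outer product `u vᵀ`. -/
def outer {e d : ℕ} (u : Fin e → ℝ) (v : Fin d → ℝ) : Fin e → Fin d → ℝ :=
  fun i j => u i * v j

/-- Gradient of a scalar function of a vector: the vector of partial derivatives. -/
def grad {n : ℕ} (f : (Fin n → ℝ) → ℝ) (v : Fin n → ℝ) : Fin n → ℝ :=
  fun i => fderiv ℝ f v (Pi.single i 1)

/-- Matrix of partial derivatives of a scalar function of a matrix. -/
def gradM {e d : ℕ} (f : (Fin e → Fin d → ℝ) → ℝ) (W : Fin e → Fin d → ℝ) :
    Fin e → Fin d → ℝ :=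
  fun i j => fderiv ℝ f W (Pi.single i (Pi.single j 1))

/-- The logistic sigmoid `σ(z) = 1 / (1 + e^{-z})`. -/
def sigm (z : ℝ) : ℝ := 1 / (1 + Real.exp (-z))

-- sigmoid derivative
lemma hasDerivAt_sigm (z : ℝ) : HasDerivAt sigm (sigm z * (1 - sigm z)) z := by
  have hpos : (0:ℝ) < 1 + Real.exp (-z) := by positivity
  have h1 : HasDerivAt (fun z : ℝ => 1 + Real.exp (-z)) (-Real.exp (-z)) z := by
    have := ((hasDerivAt_neg z).exp).const_add (1:ℝ)
    simpa using this
  have h2 := h1.inv hpos.ne'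
  have : HasDerivAt sigm (-(-Real.exp (-z)) / (1 + Real.exp (-z)) ^ 2) z := by
    have hfun : sigm = fun y : ℝ => (1 + Real.exp (-y))⁻¹ := by
      funext y; simp [sigm, one_div]
    rw [hfun]
    exact h2
  convert this using 1
  have : sigm z = (1 + Real.exp (-z))⁻¹ := by simp [sigm]
  rw [this]
  field_simp
  ring

lemma hasDerivAt_tanh (z : ℝ) : HasDerivAt Real.tanh (1 - Real.tanh z ^ 2) z := by
  have hc : Real.cosh z ≠ 0 := (Real.cosh_pos z).ne'
  have h := (Real.hasDerivAt_sinh z).div (Real.hasDerivAt_cosh z) hc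
  have hfun : (Real.sinh / Real.cosh) = Real.tanh := by
    funext t; rw [Pi.div_apply, Real.tanh_eq_sinh_div_cosh]
  rw [hfun] at h
  refine h.congr_deriv ?_
  rw [Real.tanh_eq_sinh_div_cosh]
  have h2 : Real.cosh z ^ 2 - Real.sinh z ^ 2 = 1 := by
    have := Real.cosh_sq_sub_sinh_sq z
    simpa [sq] using this
  field_simp

/-- CLM for `v ↦ matVec A v`. -/
def mulVecCLM {p q : ℕ} (A : Fin p → Fin q → ℝ) : (Fin q → ℝ) →L[ℝ] (Fin p → ℝ) :=
  ContinuousLinearMap.pi (fun k => ∑ i, A k i • ContinuousLinearMap.proj i)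

lemma mulVecCLM_apply {p q : ℕ} (A : Fin p → Fin q → ℝ) (v : Fin q → ℝ) :
    mulVecCLM A v = matVec A v := by
  funext k
  simp [mulVecCLM, matVec, ContinuousLinearMap.sum_apply]

/-- Diagonal CLM. -/
def diagCLM {p : ℕ} (dv : Fin p → ℝ) : (Fin p → ℝ) →L[ℝ] (Fin p → ℝ) :=
  ContinuousLinearMap.pi (fun k => dv k • ContinuousLinearMap.proj k)

lemma diagCLM_apply {p : ℕ} (dv : Fin p → ℝ) (v : Fin p → ℝ) (k : Fin p) :
    diagCLM dv v k = dv k * v k := by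
  simp [diagCLM]

/-- CLM `W ↦ matVec W x`. -/
def inputCLM {e d : ℕ} (x : Fin d → ℝ) : (Fin e → Fin d → ℝ) →L[ℝ] (Fin e → ℝ) :=
  ContinuousLinearMap.pi (fun i =>
    (∑ j, x j • ContinuousLinearMap.proj j).comp (ContinuousLinearMap.proj i))

lemma inputCLM_apply {e d : ℕ} (x : Fin d → ℝ) (W : Fin e → Fin d → ℝ) :
    inputCLM x W = matVec W x := by
  funext i
  simp [inputCLM, matVec, ContinuousLinearMap.sum_apply, mul_comm]

lemma hasFDerivAt_diag {p : ℕ} (g : Fin p → ℝ → ℝ) (gd : Fin p → ℝ) (a : Fin p → ℝ)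
    (hg : ∀ k, HasDerivAt (g k) (gd k) (a k)) :
    HasFDerivAt (fun z : Fin p → ℝ => fun k => g k (z k)) (diagCLM gd) a := by
  apply hasFDerivAt_pi''
  intro k
  have hproj : HasFDerivAt (fun z : Fin p → ℝ => z k)
      (ContinuousLinearMap.proj k : (Fin p → ℝ) →L[ℝ] ℝ) a := hasFDerivAt_apply k a
  have h1 := (hg k).comp_hasFDerivAt a hproj
  have h2 : HasFDerivAt (fun z : Fin p → ℝ => g k (z k))
      (gd k • (ContinuousLinearMap.proj k : (Fin p → ℝ) →L[ℝ] ℝ)) a := h1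
  refine h2.congr_fderiv (ContinuousLinearMap.ext fun v => by simp [diagCLM])

lemma fderiv_apply_eq_sum {m : ℕ} (E : (Fin m → ℝ) → ℝ) (hE : Differentiable ℝ E)
    (y v : Fin m → ℝ) :
    fderiv ℝ E y v = ∑ k, v k * grad E y k := by
  have hv : v = ∑ k, v k • (Pi.single k (1:ℝ) : Fin m → ℝ) := by
    funext j
    simp [Finset.sum_apply, Pi.single_apply]
  conv_lhs => rw [hv]
  rw [map_sum]
  refine Finset.sum_congr rfl fun k _ => ?_
  rw [map_smul]
  simp [grad, smul_eq_mul]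

lemma master {d e m : ℕ} (x : Fin d → ℝ) (b : Fin e → ℝ) (W : Fin e → Fin d → ℝ)
    (Wout : Fin m → Fin e → ℝ) (φout : ℝ → ℝ) (hφ : Differentiable ℝ φout)
    (E : (Fin m → ℝ) → ℝ) (hE : Differentiable ℝ E)
    (g : Fin e → ℝ → ℝ) (gd : Fin e → ℝ)
    (hg : ∀ k, HasDerivAt (g k) (gd k) ((matVec W x + b) k))
    (ht : Fin e → ℝ) (hht : ∀ k, g k ((matVec W x + b) k) = ht k) :
    gradM (fun W' => E (cw φout (matVec Wout (fun k => g k ((matVec W' x + b) k))))) W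
      = outer (matVecT Wout
          (grad E (cw φout (matVec Wout ht)) * cw (deriv φout) (matVec Wout ht)) * gd) x := by
  set a : Fin e → ℝ := matVec W x + b with ha
  have hGa : (fun k => g k (a k)) = ht := funext hht
  set u : Fin m → ℝ := matVec Wout ht with hu
  set yh : Fin m → ℝ := cw φout u with hyh
  -- step 1
  have h1 : HasFDerivAt (fun W' : Fin e → Fin d → ℝ => matVec W' x + b) (inputCLM x) W := by
    have := (inputCLM x).hasFDerivAt (x := W)
    have h := this.add_const b
    have hfun : (fun W' : Fin e → Fin d → ℝ => inputCLM x W' + b)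
        = (fun W' => matVec W' x + b) := by
      funext W'; rw [inputCLM_apply]
    rwa [hfun] at h
  -- step 2
  have h2 : HasFDerivAt (fun z : Fin e → ℝ => fun k => g k (z k)) (diagCLM gd) a :=
    hasFDerivAt_diag g gd a hg
  -- step 3
  have h3 : HasFDerivAt (fun z : Fin e → ℝ => matVec Wout z) (mulVecCLM Wout)
      (fun k => g k (a k)) := by
    have h := (mulVecCLM Wout).hasFDerivAt (x := fun k => g k (a k))
    have hfun : (⇑(mulVecCLM Wout) : (Fin e → ℝ) → (Fin m → ℝ))
        = fun z => matVec Wout z := funext (mulVecCLM_apply Wout)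
    rwa [hfun] at h
  have hGa' : matVec Wout (fun k => g k (a k)) = u := by rw [hGa]
  -- step 4
  have h4 : HasFDerivAt (fun z : Fin m → ℝ => cw φout z)
      (diagCLM (fun k => deriv φout (u k))) (matVec Wout (fun k => g k (a k))) := by
    rw [hGa']
    exact hasFDerivAt_diag (fun _ => φout) (fun k => deriv φout (u k)) u
      (fun k => (hφ (u k)).hasDerivAt)
  -- step 5
  have h5 : HasFDerivAt E (fderiv ℝ E yh)
      (cw φout (matVec Wout (fun k => g k (a k)))) := by
    rw [hGa']; exact (hE yh).hasFDerivAt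
  -- compose
  have c1 := h2.comp W h1
  have c2 := h3.comp W c1
  have c3 := h4.comp W c2
  have c4 := h5.comp W c3
  have hΦ : HasFDerivAt
      (fun W' => E (cw φout (matVec Wout (fun k => g k ((matVec W' x + b) k)))))
      ((fderiv ℝ E yh).comp ((diagCLM (fun k => deriv φout (u k))).comp
        ((mulVecCLM Wout).comp ((diagCLM gd).comp (inputCLM x))))) W := c4
  funext i j
  simp only [gradM]
  rw [hΦ.fderiv]
  simp only [ContinuousLinearMap.comp_apply]
  rw [inputCLM_apply]
  have hP : matVec (Pi.single i (Pi.single j (1:ℝ)) : Fin e → Fin d → ℝ) x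
      = Pi.single i (x j) := by
    funext i'
    rcases eq_or_ne i' i with rfl | hi
    · simp [matVec, Pi.single_apply, ite_mul, Finset.sum_ite_eq']
    · simp [matVec, Pi.single_apply, hi]
  rw [hP]
  have hD : diagCLM gd (Pi.single i (x j)) = Pi.single i (gd i * x j) := by
    funext k
    rcases eq_or_ne k i with rfl | hk
    · simp [diagCLM_apply]
    · simp [diagCLM_apply, Pi.single_apply, hk]
  rw [hD, mulVecCLM_apply]
  have hM : matVec Wout (Pi.single i (gd i * x j) : Fin e → ℝ)
      = fun k => Wout k i * (gd i * x j) := by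
    funext k
    simp [matVec, Pi.single_apply, mul_ite, Finset.sum_ite_eq']
  rw [hM]
  have hD2 : diagCLM (fun k => deriv φout (u k)) (fun k => Wout k i * (gd i * x j))
      = fun k => deriv φout (u k) * (Wout k i * (gd i * x j)) := by
    funext k; rw [diagCLM_apply]
  rw [hD2, fderiv_apply_eq_sum E hE]
  simp only [outer, Pi.mul_apply, matVecT, cw, Finset.sum_mul, hyh, hu]
  refine Finset.sum_congr rfl fun k _ => ?_
  ring


/-- All four input-weight gradients of one LSTM step are outer products
with the input: `∂E/∂W_o = Δᵒ xᵀ`, `∂E/∂W_i = Δⁱ xᵀ`, `∂E/∂W_g = Δᵍ xᵀ`, `∂E/∂W_f = Δᶠ xᵀ`,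
where `Δᵒ = ∂E/∂h_t ⊙ tanh(c_t) ⊙ o_t ⊙ (1 − o_t)`,
`Δⁱ = ∂E/∂h_t ⊙ o_t ⊙ (1 − tanh²(c_t)) ⊙ g_t ⊙ i_t ⊙ (1 − i_t)`,
`Δᵍ = ∂E/∂h_t ⊙ o_t ⊙ (1 − tanh²(c_t)) ⊙ i_t ⊙ (1 − g_t²)`,
`Δᶠ = ∂E/∂h_t ⊙ o_t ⊙ (1 − tanh²(c_t)) ⊙ c_{t-1} ⊙ f_t ⊙ (1 − f_t)`, and
`∂E/∂h_t = W_outᵀ [∇E(ŷ) ⊙ φ_out'(W_out h_t)]`; each `∂E/∂W` is the matrix of partial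
derivatives of the map obtained by treating that weight matrix as a free variable of the
downstream computation, all other quantities held at their actual values. -/
theorem stmt_5
    {d e m : ℕ}
    (x : Fin d → ℝ) (hprev cprev : Fin e → ℝ)
    (Wo Wi Wf Wg : Fin e → Fin d → ℝ) (Uo Ui Uf Ug : Fin e → Fin e → ℝ)
    (Wout : Fin m → Fin e → ℝ)
    (φout : ℝ → ℝ) (hφout : Differentiable ℝ φout)
    (E : (Fin m → ℝ) → ℝ) (hE : Differentiable ℝ E)
    (ot it ft gt ct ht : Fin e → ℝ) (yhat : Fin m → ℝ)
    (hot : ot = cw sigm (matVec Wo x + matVec Uo hprev))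
    (hit : it = cw sigm (matVec Wi x + matVec Ui hprev))
    (hft : ft = cw sigm (matVec Wf x + matVec Uf hprev))
    (hgt : gt = cw Real.tanh (matVec Wg x + matVec Ug hprev))
    (hct : ct = ft * cprev + it * gt)
    (hht : ht = ot * cw Real.tanh ct)
    (hyhat : yhat = cw φout (matVec Wout ht))
    (dEdh : Fin e → ℝ)
    (hdEdh : dEdh = matVecT Wout (grad E yhat * cw (deriv φout) (matVec Wout ht)))
    :
    gradM (fun W =>
        E (cw φout (matVec Wout (cw sigm (matVec W x + matVec Uo hprev) * cw Real.tanh ct)))) Wo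
      = outer (dEdh * cw Real.tanh ct * ot * (1 - ot)) x
    ∧ gradM (fun W =>
        E (cw φout (matVec Wout
          (ot * cw Real.tanh (ft * cprev + cw sigm (matVec W x + matVec Ui hprev) * gt))))) Wi
      = outer (dEdh * ot * (1 - cw Real.tanh ct ^ 2) * gt * it * (1 - it)) x
    ∧ gradM (fun W =>
        E (cw φout (matVec Wout
          (ot * cw Real.tanh (ft * cprev + it * cw Real.tanh (matVec W x + matVec Ug hprev)))))) Wg
      = outer (dEdh * ot * (1 - cw Real.tanh ct ^ 2) * it * (1 - gt ^ 2)) x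
    ∧ gradM (fun W =>
        E (cw φout (matVec Wout
          (ot * cw Real.tanh (cw sigm (matVec W x + matVec Uf hprev) * cprev + it * gt))))) Wf
      = outer (dEdh * ot * (1 - cw Real.tanh ct ^ 2) * cprev * ft * (1 - ft)) x := by
  have hS_o : ∀ k, sigm ((matVec Wo x + matVec Uo hprev) k) = ot k :=
    fun k => (congrFun hot k).symm
  have hS_i : ∀ k, sigm ((matVec Wi x + matVec Ui hprev) k) = it k :=
    fun k => (congrFun hit k).symm
  have hS_f : ∀ k, sigm ((matVec Wf x + matVec Uf hprev) k) = ft k :=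
    fun k => (congrFun hft k).symm
  have hT_g : ∀ k, Real.tanh ((matVec Wg x + matVec Ug hprev) k) = gt k :=
    fun k => (congrFun hgt k).symm
  have hct' : ∀ k, ft k * cprev k + it k * gt k = ct k :=
    fun k => (congrFun hct k).symm
  have hht' : ∀ k, ot k * Real.tanh (ct k) = ht k :=
    fun k => (congrFun hht k).symm
  refine ⟨?_, ?_, ?_, ?_⟩
  · have hg : ∀ k, HasDerivAt (fun s => sigm s * Real.tanh (ct k))
        ((cw Real.tanh ct * ot * (1 - ot)) k)
        ((matVec Wo x + matVec Uo hprev) k) := by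
      intro k
      have h := (hasDerivAt_sigm ((matVec Wo x + matVec Uo hprev) k)).mul_const
        (Real.tanh (ct k))
      refine h.congr_deriv ?_
      simp only [cw, Pi.mul_apply, Pi.sub_apply, Pi.one_apply]
      rw [← hS_o k]
      ring
    have hv : ∀ k, (fun s => sigm s * Real.tanh (ct k))
        ((matVec Wo x + matVec Uo hprev) k) = ht k := by
      intro k; simp only [hS_o k]; exact hht' k
    have H := master x (matVec Uo hprev) Wo Wout φout hφout E hE
      (fun k s => sigm s * Real.tanh (ct k)) (cw Real.tanh ct * ot * (1 - ot)) hg ht hv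
    rw [← hyhat, ← hdEdh] at H
    exact H.trans (by funext i j; simp only [outer, Pi.mul_apply, cw]; ring)
  · have hg : ∀ k, HasDerivAt
        (fun s => ot k * Real.tanh (ft k * cprev k + sigm s * gt k))
        ((ot * (1 - cw Real.tanh ct ^ 2) * gt * it * (1 - it) : Fin e → ℝ) k)
        ((matVec Wi x + matVec Ui hprev) k) := by
      intro k
      have hin : HasDerivAt (fun s => ft k * cprev k + sigm s * gt k)
          (sigm ((matVec Wi x + matVec Ui hprev) k) * (1 - sigm ((matVec Wi x + matVec Ui hprev) k)) * gt k) ((matVec Wi x + matVec Ui hprev) k) :=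
        ((hasDerivAt_sigm ((matVec Wi x + matVec Ui hprev) k)).mul_const (gt k)).const_add (ft k * cprev k)
      have harg : ft k * cprev k + sigm ((matVec Wi x + matVec Ui hprev) k) * gt k = ct k := by
        rw [hS_i k]; exact hct' k
      have hout : HasDerivAt Real.tanh (1 - Real.tanh (ct k) ^ 2)
          (ft k * cprev k + sigm ((matVec Wi x + matVec Ui hprev) k) * gt k) := by
        rw [harg]; exact hasDerivAt_tanh (ct k)
      have h := (hout.comp ((matVec Wi x + matVec Ui hprev) k) hin).const_mul (ot k)
      refine h.congr_deriv ?_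
      simp only [cw, Pi.mul_apply, Pi.sub_apply, Pi.one_apply, Pi.pow_apply]
      rw [← hS_i k]
      ring
    have hv : ∀ k, (fun s => ot k * Real.tanh (ft k * cprev k + sigm s * gt k))
        ((matVec Wi x + matVec Ui hprev) k) = ht k := by
      intro k
      simp only [hS_i k, hct' k]
      exact hht' k
    have H := master x (matVec Ui hprev) Wi Wout φout hφout E hE
      (fun k s => ot k * Real.tanh (ft k * cprev k + sigm s * gt k))
      (ot * (1 - cw Real.tanh ct ^ 2) * gt * it * (1 - it)) hg ht hv
    rw [← hyhat, ← hdEdh] at H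
    exact H.trans (by funext i j; simp only [outer, Pi.mul_apply, cw]; ring)
  · have hg : ∀ k, HasDerivAt
        (fun s => ot k * Real.tanh (ft k * cprev k + it k * Real.tanh s))
        ((ot * (1 - cw Real.tanh ct ^ 2) * it * (1 - gt ^ 2) : Fin e → ℝ) k)
        ((matVec Wg x + matVec Ug hprev) k) := by
      intro k
      have hin : HasDerivAt (fun s => ft k * cprev k + it k * Real.tanh s)
          (it k * (1 - Real.tanh ((matVec Wg x + matVec Ug hprev) k) ^ 2)) ((matVec Wg x + matVec Ug hprev) k) :=
        ((hasDerivAt_tanh ((matVec Wg x + matVec Ug hprev) k)).const_mul (it k)).const_add (ft k * cprev k)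
      have harg : ft k * cprev k + it k * Real.tanh ((matVec Wg x + matVec Ug hprev) k) = ct k := by
        rw [hT_g k]; exact hct' k
      have hout : HasDerivAt Real.tanh (1 - Real.tanh (ct k) ^ 2)
          (ft k * cprev k + it k * Real.tanh ((matVec Wg x + matVec Ug hprev) k)) := by
        rw [harg]; exact hasDerivAt_tanh (ct k)
      have h := (hout.comp ((matVec Wg x + matVec Ug hprev) k) hin).const_mul (ot k)
      refine h.congr_deriv ?_
      simp only [cw, Pi.mul_apply, Pi.sub_apply, Pi.one_apply, Pi.pow_apply]
      rw [← hT_g k]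
      ring
    have hv : ∀ k, (fun s => ot k * Real.tanh (ft k * cprev k + it k * Real.tanh s))
        ((matVec Wg x + matVec Ug hprev) k) = ht k := by
      intro k
      simp only [hT_g k, hct' k]
      exact hht' k
    have H := master x (matVec Ug hprev) Wg Wout φout hφout E hE
      (fun k s => ot k * Real.tanh (ft k * cprev k + it k * Real.tanh s))
      (ot * (1 - cw Real.tanh ct ^ 2) * it * (1 - gt ^ 2)) hg ht hv
    rw [← hyhat, ← hdEdh] at H
    exact H.trans (by funext i j; simp only [outer, Pi.mul_apply, cw]; ring)
  · have hg : ∀ k, HasDerivAt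
        (fun s => ot k * Real.tanh (sigm s * cprev k + it k * gt k))
        ((ot * (1 - cw Real.tanh ct ^ 2) * cprev * ft * (1 - ft) : Fin e → ℝ) k)
        ((matVec Wf x + matVec Uf hprev) k) := by
      intro k
      have hin : HasDerivAt (fun s => sigm s * cprev k + it k * gt k)
          (sigm ((matVec Wf x + matVec Uf hprev) k) * (1 - sigm ((matVec Wf x + matVec Uf hprev) k)) * cprev k) ((matVec Wf x + matVec Uf hprev) k) :=
        ((hasDerivAt_sigm ((matVec Wf x + matVec Uf hprev) k)).mul_const (cprev k)).add_const (it k * gt k)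
      have harg : sigm ((matVec Wf x + matVec Uf hprev) k) * cprev k + it k * gt k = ct k := by
        rw [hS_f k]; exact hct' k
      have hout : HasDerivAt Real.tanh (1 - Real.tanh (ct k) ^ 2)
          (sigm ((matVec Wf x + matVec Uf hprev) k) * cprev k + it k * gt k) := by
        rw [harg]; exact hasDerivAt_tanh (ct k)
      have h := (hout.comp ((matVec Wf x + matVec Uf hprev) k) hin).const_mul (ot k)
      refine h.congr_deriv ?_
      simp only [cw, Pi.mul_apply, Pi.sub_apply, Pi.one_apply, Pi.pow_apply]
      rw [← hS_f k]
      ring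
    have hv : ∀ k, (fun s => ot k * Real.tanh (sigm s * cprev k + it k * gt k))
        ((matVec Wf x + matVec Uf hprev) k) = ht k := by
      intro k
      simp only [hS_f k, hct' k]
      exact hht' k
    have H := master x (matVec Uf hprev) Wf Wout φout hφout E hE
      (fun k s => ot k * Real.tanh (sigm s * cprev k + it k * gt k))
      (ot * (1 - cw Real.tanh ct ^ 2) * cprev * ft * (1 - ft)) hg ht hv
    rw [← hyhat, ← hdEdh] at H
    exact H.trans (by funext i j; simp only [outer, Pi.mul_apply, cw]; ring)
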